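/- arXiv:1102.4825 — 2 statements merged into one kernel-verified Lean document; each statement's English description precedes it below -/
import Mathlib

section
/- Let T ∈ F_q^{(s−1)×s} with s ≥ 2 and suppose T ∼ (I | u) where u ∈ F_q^{s−1} is a column vector all of whose entries are nonzero. Then there exist an invertible (s−1) × (s−1) matrix Q and a column vector u' ∈ F_q^{s−1} with all entries nonzero such that T = Q (I | u') (with no column permutation). -/
open Matrix

/-- The permutation matrix of a permutation `σ` of `Fin s`. -/
def permMat {F : Type*} [Field F] {s : ℕ} (σ : Equiv.Perm (Fin s)) :
    Matrix (Fin s) (Fin s) F :=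
  fun i j => if σ i = j then 1 else 0

/-- `T ∼ T'` iff `T = Q T' Π` for some invertible `Q` and permutation matrix `Π`. -/
def MatRel {F : Type*} [Field F] {l s : ℕ} (T T' : Matrix (Fin l) (Fin s) F) : Prop :=
  ∃ Q : Matrix (Fin l) (Fin l) F, IsUnit Q ∧
    ∃ σ : Equiv.Perm (Fin s), T = Q * T' * permMat σ

/-- The `(s-1) × s` matrix `(I | u)` whose first `s-1` columns form the identity and whose
last column is `u`. -/
def Iu {F : Type*} [Field F] {s : ℕ} (u : Fin (s - 1) → F) :
    Matrix (Fin (s - 1)) (Fin s) F :=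
  fun i j => if (j : ℕ) < s - 1 then (if (i : ℕ) = (j : ℕ) then 1 else 0) else u i

section Aux

variable {F : Type*} [Field F]

lemma mul_permMat_apply {l s : ℕ} (M : Matrix (Fin l) (Fin s) F) (σ : Equiv.Perm (Fin s))
    (i : Fin l) (j : Fin s) : (M * (permMat σ : Matrix (Fin s) (Fin s) F)) i j = M i (σ⁻¹ j) := by
  have h : ∀ k : Fin s, M i k * (permMat σ k j : F) = if k = σ⁻¹ j then M i k else 0 := by
    intro k
    by_cases hk : σ k = j
    · have : k = σ⁻¹ j := by rw [← hk]; simp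
      simp [permMat, hk, this]
    · have : k ≠ σ⁻¹ j := by
        intro hke; apply hk; rw [hke]; simp
      simp [permMat, hk, this]
      exact fun h' => absurd h' this
  rw [Matrix.mul_apply, Finset.sum_congr rfl (fun k _ => h k), Finset.sum_ite_eq']
  simp

/-- Any `s-1` columns of `(I | u)` form an invertible matrix, when all entries of `u`
are nonzero. -/
lemma key {s : ℕ} (hs : 2 ≤ s) (u : Fin (s - 1) → F) (hu : ∀ i, u i ≠ 0)
    (f : Fin (s - 1) → Fin s) (hf : Function.Injective f) :
    IsUnit (Matrix.of fun i j => Iu u i (f j)) := by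
  set B : Matrix (Fin (s - 1)) (Fin (s - 1)) F := Matrix.of fun i j => Iu u i (f j) with hB
  rw [Matrix.isUnit_iff_isUnit_det, isUnit_iff_ne_zero, Ne, ← Matrix.exists_mulVec_eq_zero_iff]
  rintro ⟨v, hv0, hv⟩
  apply hv0
  -- the "spread out" version of v on Fin s
  set vt : Fin s → F := fun k => ∑ j, if f j = k then v j else 0 with hvt
  have hvt_f : ∀ j, vt (f j) = v j := by
    intro j
    rw [hvt]
    simp only
    rw [Finset.sum_congr rfl (fun j' _ => by rw [show (if f j' = f j then v j' else 0)
      = if j' = j then v j' else 0 by simp [hf.eq_iff]]), Finset.sum_ite_eq']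
    simp
  have hlastlt : s - 1 < s := by omega
  set last : Fin s := ⟨s - 1, hlastlt⟩ with hlast
  have hemb : ∀ i : Fin (s - 1), (i : ℕ) < s := fun i => lt_trans i.2 hlastlt
  -- each row of B.mulVec v = 0 gives an equation
  have hrow : ∀ i : Fin (s - 1), vt ⟨(i : ℕ), hemb i⟩ + u i * vt last = 0 := by
    intro i
    have h0 : B.mulVec v i = 0 := congrFun hv i
    rw [Matrix.mulVec, dotProduct] at h0
    have hterm : ∀ j, B i j * v j =
        (if f j = ⟨(i : ℕ), hemb i⟩ then v j else 0) +
          u i * (if f j = last then v j else 0) := by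
      intro j
      rw [hB]
      show (if ((f j : ℕ)) < s - 1 then (if (i : ℕ) = ((f j : ℕ)) then (1:F) else 0)
          else u i) * v j = _
      by_cases hfj : ((f j : ℕ)) < s - 1
      · have hne : f j ≠ last := by
          intro hc
          have : ((f j : ℕ)) = s - 1 := congrArg Fin.val hc
          omega
        rw [if_pos hfj, if_neg hne, mul_zero, add_zero]
        by_cases hij : (i : ℕ) = ((f j : ℕ))
        · rw [if_pos hij, one_mul, if_pos (Fin.ext hij.symm)]
        · rw [if_neg hij, zero_mul]
          exact (if_neg (show f j ≠ ⟨(i : ℕ), hemb i⟩ from fun hc =>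
            hij (show (i : ℕ) = ((f j : ℕ)) from (congrArg Fin.val hc).symm))).symm
      · have hfjv : ((f j : ℕ)) = s - 1 := by have := (f j).2; omega
        have heq : f j = last := Fin.ext hfjv
        have hne : f j ≠ ⟨(i : ℕ), hemb i⟩ := by
          intro hc
          have : ((f j : ℕ)) = (i : ℕ) := congrArg Fin.val hc
          have := i.2; omega
        rw [if_neg hfj, if_neg hne, if_pos heq, zero_add, mul_comm]
    rw [Finset.sum_congr rfl (fun j _ => hterm j), Finset.sum_add_distrib,
      ← Finset.mul_sum] at h0
    exact h0
  -- f misses some m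
  have hnsurj : ¬ Function.Surjective f := by
    intro hsurj
    have := Fintype.card_le_of_surjective f hsurj
    simp at this
    omega
  rw [Function.Surjective] at hnsurj
  push_neg at hnsurj
  obtain ⟨m, hm⟩ := hnsurj
  have hvtm : vt m = 0 := by
    rw [hvt]
    apply Finset.sum_eq_zero
    intro j _
    simp [hm j]
  by_cases hc : vt last = 0
  · -- vt is zero everywhere, hence v = 0
    funext j
    rw [← hvt_f j]
    by_cases hfj : ((f j : ℕ)) < s - 1
    · have h1 := hrow ⟨(f j : ℕ), hfj⟩
      rw [hc, mul_zero, add_zero] at h1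
      have h2 : (⟨((⟨(f j : ℕ), hfj⟩ : Fin (s - 1)) : ℕ), hemb _⟩ : Fin s) = f j :=
        Fin.ext rfl
      rw [h2] at h1
      exact h1
    · have hfjv : ((f j : ℕ)) = s - 1 := by have := (f j).2; omega
      have : f j = last := Fin.ext hfjv
      rw [this, hc]
      rfl
  · -- vt is nonzero everywhere, contradicting vt m = 0
    exfalso
    by_cases hmlt : (m : ℕ) < s - 1
    · have := hrow ⟨(m : ℕ), hmlt⟩
      have hmm : (⟨((⟨(m : ℕ), hmlt⟩ : Fin (s - 1)) : ℕ), hemb _⟩ : Fin s) = m := by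
        apply Fin.ext; rfl
      rw [hmm, hvtm, zero_add] at this
      exact hc (by
        rcases mul_eq_zero.1 this with h | h
        · exact absurd h (hu _)
        · exact h)
    · have : m = last := by
        apply Fin.ext
        have := m.2
        simp only [hlast]
        omega
      rw [this] at hvtm
      exact hc hvtm

end Aux

theorem stmt_3 (F : Type*) [Field F] [Fintype F] {s : ℕ} (hs : 2 ≤ s)
    (T : Matrix (Fin (s - 1)) (Fin s) F) (u : Fin (s - 1) → F) (hu : ∀ i, u i ≠ 0)
    (h : MatRel T (Iu u)) :
    ∃ Q : Matrix (Fin (s - 1)) (Fin (s - 1)) F, IsUnit Q ∧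
      ∃ u' : Fin (s - 1) → F, (∀ i, u' i ≠ 0) ∧ T = Q * Iu u' := by
  obtain ⟨Q, hQ, σ, hT⟩ := h
  have hlastlt : s - 1 < s := by omega
  set last : Fin s := ⟨s - 1, hlastlt⟩ with hlast
  have hemb : ∀ i : Fin (s - 1), (i : ℕ) < s := fun i => lt_trans i.2 hlastlt
  set emb : Fin (s - 1) → Fin s := fun i => ⟨(i : ℕ), hemb i⟩ with hembdef
  have hembinj : Function.Injective emb := by
    intro a b hab
    have : ((emb a : Fin s) : ℕ) = ((emb b : Fin s) : ℕ) := congrArg Fin.val hab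
    exact Fin.ext this
  -- the submatrix of T given by columns g equals Q * (corresponding columns of Iu u)
  have hsub : ∀ g : Fin (s - 1) → Fin s,
      (Matrix.of fun i j => T i (g j)) =
        Q * (Matrix.of fun i j => Iu u i (σ⁻¹ (g j))) := by
    intro g
    ext i j
    rw [Matrix.of_apply, hT]
    refine (mul_permMat_apply (Q * Iu u) σ i (g j)).trans ?_
    rw [Matrix.mul_apply, Matrix.mul_apply]
    rfl
  set Q' : Matrix (Fin (s - 1)) (Fin (s - 1)) F := Matrix.of fun i j => T i (emb j) with hQ'def
  have hQ' : IsUnit Q' := by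
    rw [hQ'def, hsub emb]
    exact hQ.mul (key hs u hu (fun j => σ⁻¹ (emb j)) ((Equiv.injective σ⁻¹).comp hembinj))
  have hQ'det : IsUnit Q'.det := (Matrix.isUnit_iff_isUnit_det _).1 hQ'
  have hQQ : Q' * Q'⁻¹ = 1 := Matrix.mul_nonsing_inv _ hQ'det
  set u' : Fin (s - 1) → F := Q'⁻¹.mulVec (fun i => T i last) with hu'def
  have hmain : T = Q' * Iu u' := by
    ext i k
    rw [Matrix.mul_apply]
    by_cases hk : (k : ℕ) < s - 1
    · have hterm : ∀ b, Q' i b * Iu u' b k =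
          if b = (⟨(k : ℕ), hk⟩ : Fin (s - 1)) then Q' i b else 0 := by
        intro b
        simp only [Iu, hk, if_true]
        by_cases hb : (b : ℕ) = (k : ℕ)
        · have : b = (⟨(k : ℕ), hk⟩ : Fin (s - 1)) := Fin.ext hb
          simp [hb, this]
        · have : b ≠ (⟨(k : ℕ), hk⟩ : Fin (s - 1)) := by
            intro hc; exact hb (congrArg Fin.val hc)
          simp [hb, this]
      rw [Finset.sum_congr rfl (fun b _ => hterm b), Finset.sum_ite_eq',
        if_pos (Finset.mem_univ _)]
      show T i k = T i (emb ⟨(k : ℕ), hk⟩)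
      have : emb ⟨(k : ℕ), hk⟩ = k :=
        Fin.ext (show ((emb ⟨(k : ℕ), hk⟩ : Fin s) : ℕ) = (k : ℕ) from rfl)
      rw [this]
    · have hkval : (k : ℕ) = s - 1 := by have := k.2; omega
      have hkl : k = last := Fin.ext (by simpa [hlast] using hkval)
      have : ∀ b, Iu u' b k = u' b := by
        intro b; simp [Iu, hk]
      rw [Finset.sum_congr rfl (fun b _ => by rw [this b])]
      have : ∑ b, Q' i b * u' b = Q'.mulVec u' i := rfl
      rw [this, hu'def, Matrix.mulVec_mulVec, hQQ, Matrix.one_mulVec, hkl]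
  refine ⟨Q', hQ', u', ?_, hmain⟩
  intro i0
  intro h0
  set g : Fin (s - 1) → Fin s := fun j => if j = i0 then last else emb j with hgdef
  have hginj : Function.Injective g := by
    intro a b hab
    rw [hgdef] at hab
    simp only at hab
    by_cases ha : a = i0 <;> by_cases hb : b = i0
    · rw [ha, hb]
    · exfalso
      rw [if_pos ha, if_neg hb] at hab
      have : (s - 1 : ℕ) = (b : ℕ) := congrArg Fin.val hab
      have := b.2; omega
    · exfalso
      rw [if_neg ha, if_pos hb] at hab
      have : ((a : ℕ)) = s - 1 := congrArg Fin.val hab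
      have := a.2; omega
    · rw [if_neg ha, if_neg hb] at hab
      exact hembinj hab
  have hUnit : IsUnit (Matrix.of fun i j => T i (g j)) := by
    rw [hsub g]
    exact hQ.mul (key hs u hu (fun j => σ⁻¹ (g j)) ((Equiv.injective σ⁻¹).comp hginj))
  have hfact : (Matrix.of fun i j => T i (g j)) =
      Q' * (Matrix.of fun b j => Iu u' b (g j)) := by
    funext i j
    rw [Matrix.of_apply, hmain, Matrix.mul_apply, Matrix.mul_apply]
    rfl
  have hrowzero : ∀ j, (Matrix.of fun b j => Iu u' b (g j)) i0 j = 0 := by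
    intro j
    show Iu u' i0 (if j = i0 then last else emb j) = 0
    by_cases hj : j = i0
    · rw [if_pos hj]
      show (if ((last : Fin s) : ℕ) < s - 1 then (if (i0 : ℕ) = ((last : Fin s) : ℕ)
          then (1:F) else 0) else u' i0) = 0
      rw [if_neg (show ¬ (s - 1 < s - 1) by omega)]
      exact h0
    · rw [if_neg hj]
      show (if ((emb j : Fin s) : ℕ) < s - 1 then (if (i0 : ℕ) = ((emb j : Fin s) : ℕ)
          then (1:F) else 0) else u' (i0)) = 0
      rw [if_pos (show ((j : ℕ)) < s - 1 from j.2),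
        if_neg (fun hc => hj (Fin.ext (hc.symm : ((j : ℕ)) = (i0 : ℕ))))]
  have hdet0 : (Matrix.of fun b j => Iu u' b (g j)).det = 0 :=
    Matrix.det_eq_zero_of_row_eq_zero i0 hrowzero
  have := (Matrix.isUnit_iff_isUnit_det _).1 hUnit
  rw [hfact, Matrix.det_mul, hdet0, mul_zero] at this
  exact (isUnit_iff_ne_zero.1 this) rfl
end

section
/- Let M be an s × (s−1) matrix over a field such that for every i, the (s−1) × (s−1) submatrix M_{(i)} obtained by deleting the i-th row is invertible. Then every entry of the row vector (last row of M) · M_{(s)}⁻¹ ∈ F^{1×(s−1)} is nonzero. -/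
open Matrix

theorem stmt_14 (F : Type*) [Field F] {n : ℕ} (hn : 1 ≤ n)
    (M : Matrix (Fin (n + 1)) (Fin n) F)
    (hM : ∀ i : Fin (n + 1), IsUnit (M.submatrix i.succAbove id)) :
    ∀ j : Fin n,
      Matrix.vecMul (M (Fin.last n)) (M.submatrix (Fin.last n).succAbove id)⁻¹ j ≠ 0 := by
  intro j h0
  set A := M.submatrix (Fin.last n).succAbove id with hA
  set r := Matrix.vecMul (M (Fin.last n)) A⁻¹ with hr
  have hAdet : IsUnit A.det := (Matrix.isUnit_iff_isUnit_det A).mp (hM (Fin.last n))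
  have hrA : Matrix.vecMul r A = M (Fin.last n) := by
    rw [hr, Matrix.vecMul_vecMul, Matrix.nonsing_inv_mul A hAdet, Matrix.vecMul_one]
  set i := j.castSucc with hi
  set B := M.submatrix i.succAbove id with hB
  have hBdet : IsUnit B.det := (Matrix.isUnit_iff_isUnit_det B).mp (hM i)
  set w : Fin (n + 1) → F := Fin.lastCases 1 (fun k => -r k) with hw
  set v : Fin n → F := fun k => w (i.succAbove k) with hv
  have hwi : w i = 0 := by
    simp only [hi, hw, Fin.lastCases_castSucc, h0, neg_zero]
  have key : ∀ c, ∑ t : Fin (n + 1), w t * M t c = 0 := by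
    intro c
    rw [Fin.sum_univ_castSucc]
    have h1 : ∀ k : Fin n, w k.castSucc * M k.castSucc c = -(r k * A k c) := by
      intro k
      simp only [hw, Fin.lastCases_castSucc, hA, Matrix.submatrix_apply,
        Fin.succAbove_last, id_eq]
      ring
    have h2 : (Matrix.vecMul r A) c = M (Fin.last n) c := by rw [hrA]
    rw [Matrix.vecMul, dotProduct] at h2
    simp only [h1]
    simp only [hw, Fin.lastCases_last, one_mul]
    rw [Finset.sum_neg_distrib, h2]
    ring
  have hvB : Matrix.vecMul v B = 0 := by
    funext c
    have hsplit := Fin.sum_univ_succAbove (fun t => w t * M t c) i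
    rw [key c, hwi, zero_mul, zero_add] at hsplit
    rw [Matrix.vecMul, dotProduct]
    simp only [Pi.zero_apply]
    rw [hsplit]
    apply Finset.sum_congr rfl
    intro k _
    rw [hv, hB]
    simp [Matrix.submatrix_apply]
  have hk0 : ∃ k0 : Fin n, i.succAbove k0 = Fin.last n := by
    refine ⟨⟨n - 1, by omega⟩, ?_⟩
    rw [Fin.succAbove]
    rw [if_neg]
    · ext; simp; omega
    · rw [hi, Fin.lt_def]
      simp
      omega
  obtain ⟨k0, hk0⟩ := hk0
  have hvk0 : v k0 = 1 := by rw [hv]; simp only [hk0, hw, Fin.lastCases_last]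
  have : v = 0 := by
    have : Matrix.vecMul (Matrix.vecMul v B) B⁻¹ = v := by
      rw [Matrix.vecMul_vecMul, Matrix.mul_nonsing_inv B hBdet, Matrix.vecMul_one]
    rw [← this, hvB, Matrix.zero_vecMul]
  rw [this] at hvk0
  exact one_ne_zero hvk0.symm
end
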